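/- arXiv:1309.0088 — 2 statements merged into one kernel-verified Lean document; each statement's English description precedes it below -/
import Mathlib

section
/- Fix α ≥ 2, 0 ≤ k ≤ 1, β > 0, and a sufficiently small ε > 0, and let μ = α/(α−1). For each n, let γ_1*, …, γ_n* be i.i.d. random variables each distributed as the maximum of m = n^k i.i.d. Pareto(α) random variables, let t = n^{(k+1)/(α+1)−ε}, r = n − t + 1, and let γ*_(r) denote the r-th smallest (equivalently, the t-th largest) value among γ_1*, …, γ_n*. Then liminf_{n→∞} Pr{ γ*_(r) ≥ 2βμt } ≥ 1/2; in particular, for all sufficiently large n, Pr{ γ*_(r) ≥ 2βμt } ≥ 1/2 − δ for any fixed δ > 0. -/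
open MeasureTheory ProbabilityTheory Filter
open scoped ENNReal
set_option maxHeartbeats 1000000

/-- The `r`-th smallest value (1-indexed) among `g 0, …, g (n-1)`:
the order statistic of the sample `g`. -/
noncomputable def orderStat {n : ℕ} (g : Fin n → ℝ) (r : ℕ) : ℝ :=
  ((List.ofFn g).insertionSort (· ≤ ·)).getD (r - 1) 0

/-- Cache size `m = n ^ k` (rounded up to an integer). -/
noncomputable def cacheSize (k : ℝ) (n : ℕ) : ℕ := ⌈(n : ℝ) ^ k⌉₊

/-- Number of activated pairs `t = n ^ ((k+1)/(α+1) - ε)` (rounded up to an integer). -/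
noncomputable def numActive (α k ε : ℝ) (n : ℕ) : ℕ :=
  ⌈(n : ℝ) ^ ((k + 1) / (α + 1) - ε)⌉₊


lemma count_lt_of_orderStat_lt {n t : ℕ} (g : Fin n → ℝ) (x : ℝ)
    (ht1 : 1 ≤ t) (htn : t ≤ n)
    (h : orderStat g (n - t + 1) < x) :
    n - t + 1 ≤ (Finset.univ.filter (fun i => g i < x)).card := by
  set l := (List.ofFn g).insertionSort (· ≤ ·) with hl
  have hperm : ((List.ofFn g)).Perm l := (List.perm_insertionSort _ _).symm
  have hsorted : l.Pairwise (· ≤ ·) := List.pairwise_insertionSort _ _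
  have hlen : l.length = n := by rw [← hperm.length_eq, List.length_ofFn]
  set j := n - t with hj
  have hjn : j < n := by omega
  have hgd : orderStat g (n - t + 1) = l.get ⟨j, by omega⟩ := by
    rw [orderStat]
    have : n - t + 1 - 1 = j := by omega
    rw [this, List.getD_eq_getElem _ _ (by rw [hlen]; omega)]
    simp
    rfl
  -- all elements of take (j+1) are < x
  have htake : ∀ y ∈ l.take (j+1), decide (y < x) = true := by
    intro y hy
    rw [List.mem_take_iff_getElem] at hy
    obtain ⟨i, hi, rfl⟩ := hy
    have hij : i ≤ j := by omega
    have : l[i] ≤ l.get ⟨j, by omega⟩ := by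
      rcases lt_or_eq_of_le hij with hlt | rfl
      · exact hsorted.rel_get_of_lt (a := ⟨i, by omega⟩) (b := ⟨j, by omega⟩) hlt
      · simp [List.get]
    simpa using this.trans_lt (hgd ▸ h)
  have hcount : j + 1 ≤ l.countP (fun y => decide (y < x)) := by
    calc j + 1 = (l.take (j+1)).length := by
          rw [List.length_take]; omega
      _ = (l.take (j+1)).countP (fun y => decide (y < x)) :=
          (List.countP_eq_length.mpr htake).symm
      _ ≤ _ := by
          conv_rhs => rw [← List.take_append_drop (j+1) l]
          rw [List.countP_append]; omega
  have hcount2 : l.countP (fun y => decide (y < x))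
      = (Finset.univ.filter (fun i => g i < x)).card := by
    rw [← hperm.countP_eq, List.ofFn_eq_map, List.countP_map]
    have : (Finset.univ.filter (fun i : Fin n => g i < x)).card
        = ((List.finRange n).filter (fun i => decide (g i < x))).length := by
      simp [Finset.filter, Finset.card]; rfl
    rw [this, List.countP_eq_length_filter]; rfl
  omega

lemma prob_lower {Ω : Type*} [MeasurableSpace Ω] (P : Measure Ω) [IsProbabilityMeasure P]
    {n t m : ℕ} {α : ℝ} (hα : 0 ≤ α) (γ : Fin n → Ω → ℝ)
    (hindep : iIndepFun γ P)
    (hcdf : ∀ i x, P {ω | γ i ω ≤ x}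
      = ENNReal.ofReal (if x < 1 then 0 else (1 - x ^ (-α)) ^ m))
    (x : ℝ) (hx : 1 ≤ x) (ht1 : 1 ≤ t) (htn : t ≤ n) :
    1 - ENNReal.ofReal ((n.choose (n-t+1) : ℝ) * ((1 - x^(-α)) ^ m) ^ (n-t+1))
      ≤ P {ω | x ≤ orderStat (fun i => γ i ω) (n - t + 1)} := by
  set N := n - t + 1 with hN
  set s : ℝ := (1 - x^(-α)) ^ m with hs
  have hs0 : 0 ≤ s := by
    apply pow_nonneg
    have : x ^ (-α) ≤ 1 :=
      Real.rpow_le_one_of_one_le_of_nonpos hx (by linarith)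
    linarith
  set A := {ω | x ≤ orderStat (fun i => γ i ω) N} with hA
  have hsub : Aᶜ ⊆ ⋃ T ∈ Finset.univ.powersetCard N, ⋂ i ∈ T, γ i ⁻¹' Set.Iio x := by
    intro ω hω
    have hlt : orderStat (fun i => γ i ω) N < x := lt_of_not_ge hω
    have hcard := count_lt_of_orderStat_lt (fun i => γ i ω) x ht1 htn hlt
    obtain ⟨T, hTsub, hTcard⟩ := Finset.exists_subset_card_eq hcard
    refine Set.mem_iUnion₂.mpr ⟨T, ?_, ?_⟩
    · exact Finset.mem_powersetCard.mpr ⟨Finset.subset_univ _, hTcard⟩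
    · refine Set.mem_iInter₂.mpr fun i hi => ?_
      have := hTsub hi
      simpa using (Finset.mem_filter.mp this).2
  have hterm : ∀ T ∈ Finset.univ.powersetCard N,
      P (⋂ i ∈ T, γ i ⁻¹' Set.Iio x) ≤ ENNReal.ofReal (s ^ N) := by
    intro T hT
    have hTcard : T.card = N := (Finset.mem_powersetCard.mp hT).2
    rw [hindep.meas_biInter (fun i _ => ⟨Set.Iio x, measurableSet_Iio, rfl⟩)]
    calc ∏ i ∈ T, P (γ i ⁻¹' Set.Iio x)
        ≤ ∏ i ∈ T, ENNReal.ofReal s := by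
          refine Finset.prod_le_prod' fun i _ => ?_
          have hmono : P (γ i ⁻¹' Set.Iio x) ≤ P {ω | γ i ω ≤ x} :=
            measure_mono (fun ω hω => (le_of_lt hω : γ i ω ≤ x))
          rw [hcdf i x, if_neg (not_lt.mpr hx)] at hmono
          exact hmono
      _ = ENNReal.ofReal s ^ N := by rw [Finset.prod_const, hTcard]
      _ = ENNReal.ofReal (s ^ N) := by rw [ENNReal.ofReal_pow hs0]
  have hcompl : P Aᶜ ≤ ENNReal.ofReal ((n.choose N : ℝ) * s ^ N) := by
    calc P Aᶜ ≤ ∑ T ∈ Finset.univ.powersetCard N, P (⋂ i ∈ T, γ i ⁻¹' Set.Iio x) :=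
          (measure_mono hsub).trans (measure_biUnion_finset_le _ _)
      _ ≤ ∑ _T ∈ Finset.univ.powersetCard N, ENNReal.ofReal (s ^ N) :=
          Finset.sum_le_sum hterm
      _ = (n.choose N : ℕ) * ENNReal.ofReal (s ^ N) := by
          rw [Finset.sum_const, Finset.card_powersetCard, Finset.card_univ, Fintype.card_fin,
            nsmul_eq_mul]
      _ = ENNReal.ofReal ((n.choose N : ℝ) * s ^ N) := by
          rw [ENNReal.ofReal_mul (by positivity)]
          simp
  have hone : (1 : ℝ≥0∞) ≤ P A + P Aᶜ := by
    rw [← measure_univ (μ := P), ← Set.union_compl_self A]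
    exact measure_union_le _ _
  rw [tsub_le_iff_right]
  exact le_trans hone (add_le_add le_rfl hcompl)

lemma asym_bound (α k ε β μ : ℝ) (hα : 2 ≤ α) (hk0 : 0 ≤ k) (hk1 : k ≤ 1) (hβ : 0 < β)
    (hε0 : 0 < ε) (hε1 : ε < (k + 1) / (α + 1)) (hμ : μ = α / (α - 1))
    (δ : ℝ) (hδ : 0 < δ) :
    ∀ᶠ n : ℕ in atTop,
      1 ≤ numActive α k ε n ∧ numActive α k ε n ≤ n ∧
      1 ≤ 2 * β * μ * (numActive α k ε n : ℝ) ∧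
      (n.choose (n - numActive α k ε n + 1) : ℝ) *
        ((1 - (2 * β * μ * (numActive α k ε n : ℝ)) ^ (-α)) ^ (cacheSize k n)) ^
          (n - numActive α k ε n + 1) ≤ δ := by
  have hα1 : (0:ℝ) < α - 1 := by linarith
  have hμ1 : 1 < μ := by rw [hμ, lt_div_iff₀ hα1]; linarith
  have hμ2 : μ ≤ 2 := by rw [hμ, div_le_iff₀ hα1]; linarith
  have hbm : 0 < 2 * β * μ := by nlinarith
  set e := (k + 1) / (α + 1) - ε with he
  have he0 : 0 < e := by rw [he]; linarith
  have he1 : e < 1 := by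
    have h23 : (k+1)/(α+1) ≤ 2/3 := by
      apply div_le_div₀ (by norm_num) (by linarith) (by linarith) (by linarith)
    rw [he]; linarith
  set E := (α + 1) * ε with hE
  have hE0 : 0 < E := by rw [hE]; nlinarith
  set c₁ := (4 * β * μ) ^ (-α) with hc
  have h4bm : (0:ℝ) < 4 * β * μ := by nlinarith
  have hc₁ : 0 < c₁ := Real.rpow_pos_of_pos h4bm _
  have hcast : Tendsto (fun n : ℕ => (n:ℝ)) atTop atTop := tendsto_natCast_atTop_atTop
  -- F1 : x^e + 1 ≤ x/2 eventually
  have F1 : ∀ᶠ x : ℝ in atTop, x ^ e + 1 ≤ x / 2 := by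
    have h1 : Tendsto (fun x : ℝ => x ^ (e-1) + x⁻¹) atTop (nhds 0) := by
      have ha := tendsto_rpow_neg_atTop (by linarith : (0:ℝ) < 1 - e)
      have ha' : Tendsto (fun x : ℝ => x ^ (e-1)) atTop (nhds 0) := by
        refine ha.congr' ?_
        filter_upwards [eventually_gt_atTop (0:ℝ)] with x hx
        rw [neg_sub]
      simpa using ha'.add tendsto_inv_atTop_zero
    filter_upwards [h1.eventually_lt_const (by norm_num : (0:ℝ) < 1/2),
      eventually_ge_atTop (1:ℝ)] with x hx hx1
    have hx0 : (0:ℝ) < x := by linarith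
    have hrw : x ^ (e-1) = x ^ e / x := by
      rw [Real.rpow_sub hx0, Real.rpow_one]
    rw [hrw] at hx
    have : x ^ e / x + x⁻¹ = (x ^ e + 1) / x := by field_simp
    rw [this] at hx
    calc x ^ e + 1 = (x ^ e + 1) / x * x := by field_simp
      _ ≤ 1/2 * x := by
          apply mul_le_mul_of_nonneg_right hx.le (by linarith)
      _ = x / 2 := by ring
  have F2 : ∀ᶠ x : ℝ in atTop, 1 / (2*β*μ) ≤ x ^ e :=
    (tendsto_rpow_atTop he0).eventually_ge_atTop _
  have F4 : ∀ᶠ x : ℝ in atTop, -Real.log δ ≤ x ^ e :=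
    (tendsto_rpow_atTop he0).eventually_ge_atTop _
  have F3 : ∀ᶠ x : ℝ in atTop, Real.log x + 1 ≤ c₁/2 * x ^ E := by
    have hb := (isLittleO_log_rpow_atTop hE0).bound (by positivity : (0:ℝ) < c₁/4)
    filter_upwards [hb, (tendsto_rpow_atTop hE0).eventually_ge_atTop (4/c₁),
      eventually_ge_atTop (1:ℝ)] with x hx hx4 hx1
    have hlog : (0:ℝ) ≤ Real.log x := Real.log_nonneg hx1
    have hxE : (0:ℝ) ≤ x ^ E := Real.rpow_nonneg (by linarith) _
    rw [Real.norm_eq_abs, Real.norm_eq_abs, abs_of_nonneg hlog, abs_of_nonneg hxE] at hx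
    have h1 : (1:ℝ) ≤ c₁/4 * x ^ E := by
      rw [div_le_iff₀ hc₁] at hx4
      nlinarith [hx4]
    linarith
  filter_upwards [hcast.eventually F1, hcast.eventually F2, hcast.eventually F3,
    hcast.eventually F4, eventually_ge_atTop (1:ℕ)] with n h1 h2 h3 h4 hn1
  have hn1' : (1:ℝ) ≤ n := by exact_mod_cast hn1
  have hn0 : (0:ℝ) < n := by linarith
  set tn := numActive α k ε n with htn_def
  set m := cacheSize k n with hm_def
  set t : ℝ := (tn : ℝ) with ht_def
  have ht_low : (n:ℝ)^e ≤ t := Nat.le_ceil _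
  have ht_hi : t ≤ (n:ℝ)^e + 1 := (Nat.ceil_lt_add_one (by positivity)).le
  have hne1 : (1:ℝ) ≤ (n:ℝ)^e := Real.one_le_rpow hn1' he0.le
  have htn1 : 1 ≤ tn := by
    have h : (1:ℝ) ≤ t := le_trans hne1 ht_low
    rw [ht_def] at h
    exact_mod_cast h
  have htnn : tn ≤ n := by
    have h : t ≤ (n:ℝ) := by linarith
    rw [ht_def] at h
    exact_mod_cast h
  set x : ℝ := 2 * β * μ * t with hx_def
  have hx1 : (1:ℝ) ≤ x := by
    have h2' : 1 ≤ (n:ℝ)^e * (2*β*μ) := by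
      rw [div_le_iff₀ hbm] at h2; linarith
    have h2'' : (n:ℝ)^e * (2*β*μ) ≤ t * (2*β*μ) :=
      mul_le_mul_of_nonneg_right ht_low hbm.le
    rw [hx_def]; nlinarith [h2', h2'', ht_low]
  have hx0 : (0:ℝ) < x := by linarith
  set q : ℝ := x ^ (-α) with hq_def
  have hq0 : 0 < q := Real.rpow_pos_of_pos hx0 _
  have hq1 : q ≤ 1 := Real.rpow_le_one_of_one_le_of_nonpos hx1 (by linarith)
  have hxhi : x ≤ 4*β*μ*(n:ℝ)^e := by
    have ha := mul_le_mul_of_nonneg_left ht_hi hbm.le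
    have hb' := mul_le_mul_of_nonneg_left hne1 hbm.le
    rw [hx_def]; linarith [ha, hb']
  have hq_low : c₁ * (n:ℝ)^(e * -α) ≤ q := by
    have h1' : c₁ * (n:ℝ)^(e * -α) = (4*β*μ*(n:ℝ)^e) ^ (-α) := by
      rw [Real.mul_rpow h4bm.le (by positivity), hc, Real.rpow_mul hn0.le]
    rw [h1']
    exact Real.rpow_le_rpow_of_nonpos hx0 hxhi (by linarith)
  have hmlow : (n:ℝ)^k ≤ (m:ℝ) := Nat.le_ceil _
  set N := n - tn + 1 with hN_def
  have hNcast : (N:ℝ) = (n:ℝ) - t + 1 := by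
    rw [hN_def, Nat.cast_add, Nat.cast_sub htnn, Nat.cast_one]
  have hNhalf : (n:ℝ)/2 ≤ (N:ℝ) := by rw [hNcast]; linarith
  -- exponent identity
  have hexp_id : k + 1 + e * -α = e + E := by
    rw [he, hE]; field_simp; ring
  have hqmN : c₁/2 * ((n:ℝ)^e * (n:ℝ)^E) ≤ (m:ℝ) * (N:ℝ) * q := by
    have key : (n:ℝ)^k * ((n:ℝ)/2) * (c₁ * (n:ℝ)^(e * -α)) ≤ (m:ℝ) * (N:ℝ) * q := by
      have hm0 : (0:ℝ) ≤ (n:ℝ)^k := by positivity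
      have hN0 : (0:ℝ) ≤ (n:ℝ)/2 := by positivity
      have hq0' : (0:ℝ) ≤ c₁ * (n:ℝ)^(e * -α) := by positivity
      gcongr
    refine le_trans (le_of_eq ?_) key
    have : (n:ℝ)^k * ((n:ℝ)/2) * (c₁ * (n:ℝ)^(e * -α))
        = c₁/2 * ((n:ℝ)^k * (n:ℝ)^(1:ℝ) * (n:ℝ)^(e * -α)) := by
      rw [Real.rpow_one]; ring
    rw [this, ← Real.rpow_add hn0 e E, ← hexp_id, Real.rpow_add hn0 (k+1) (e * -α), Real.rpow_add hn0 k 1]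
  -- bound on choose
  have hA : (n.choose N : ℝ) ≤ Real.exp ((n:ℝ)^e * Real.log n) := by
    have hsym : n.choose N = n.choose (tn - 1) := by
      have : N = n - (tn - 1) := by omega
      rw [this, Nat.choose_symm (by omega)]
    have hle : (n.choose N : ℝ) ≤ (n:ℝ) ^ (tn - 1) := by
      rw [hsym]
      exact_mod_cast Nat.choose_le_pow n (tn - 1)
    refine hle.trans ?_
    have hrw : (n:ℝ) ^ (tn - 1) = Real.exp ((tn - 1 : ℕ) * Real.log n) := by
      rw [Real.exp_nat_mul, Real.exp_log hn0]
    rw [hrw]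
    apply Real.exp_le_exp.mpr
    apply mul_le_mul_of_nonneg_right _ (Real.log_nonneg hn1')
    have : ((tn - 1 : ℕ) : ℝ) = t - 1 := by
      rw [Nat.cast_sub htn1, Nat.cast_one]
    rw [this]; linarith
  have hB : ((1 - q) ^ m) ^ N ≤ Real.exp (-((m * N : ℕ) * q)) := by
    rw [← pow_mul]
    have h1q : 0 ≤ 1 - q := by linarith
    calc (1-q) ^ (m * N) ≤ Real.exp (-q) ^ (m * N) := by
          apply pow_le_pow_left₀ h1q
          linarith [Real.add_one_le_exp (-q)]
      _ = Real.exp ((m * N : ℕ) * (-q)) := by rw [Real.exp_nat_mul]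
      _ = Real.exp (-((m * N : ℕ) * q)) := by ring_nf
  refine ⟨htn1, htnn, hx1, ?_⟩
  have hB0 : (0:ℝ) ≤ ((1 - q) ^ m) ^ N := by
    apply pow_nonneg; apply pow_nonneg; linarith
  calc (n.choose N : ℝ) * ((1 - q) ^ m) ^ N
      ≤ Real.exp ((n:ℝ)^e * Real.log n) * Real.exp (-((m * N : ℕ) * q)) := by
        apply mul_le_mul hA hB hB0 (Real.exp_nonneg _)
    _ = Real.exp ((n:ℝ)^e * Real.log n - (m * N : ℕ) * q) := by
        rw [← Real.exp_add]; ring_nf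
    _ ≤ Real.exp (Real.log δ) := by
        apply Real.exp_le_exp.mpr
        have hcast2 : ((m * N : ℕ) : ℝ) = (m:ℝ) * (N:ℝ) := by push_cast; ring
        rw [hcast2]
        have step1 : (n:ℝ)^e * Real.log n - (m:ℝ) * (N:ℝ) * q
            ≤ (n:ℝ)^e * Real.log n - c₁/2 * ((n:ℝ)^e * (n:ℝ)^E) := by linarith
        have step2 : (n:ℝ)^e * Real.log n - c₁/2 * ((n:ℝ)^e * (n:ℝ)^E)
            = (n:ℝ)^e * (Real.log n - c₁/2 * (n:ℝ)^E) := by ring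
        have step3 : (n:ℝ)^e * (Real.log n - c₁/2 * (n:ℝ)^E) ≤ (n:ℝ)^e * (-1) := by
          apply mul_le_mul_of_nonneg_left _ (by positivity)
          linarith
        have step4 : (n:ℝ)^e * (-1) ≤ Real.log δ := by linarith
        linarith [step1, step2.le, step3, step4]
    _ = δ := Real.exp_log hδ

/-- Fix `α ≥ 2`, `0 ≤ k ≤ 1`, `β > 0`, a sufficiently small `ε > 0`, and let
`μ = α/(α-1)`. For each `n`, let `γ*_1, …, γ*_n` be i.i.d., each distributed as the maximum of
`m = n^k` i.i.d. Pareto(α) random variables (so each has cdf `(1 - x^(-α))^m` for `x ≥ 1`),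
let `t = n^((k+1)/(α+1)-ε)`, `r = n - t + 1`, and let `γ*_(r)` be the `r`-th smallest of the
`γ*_i`.  Then `liminf_{n→∞} Pr{γ*_(r) ≥ 2βμt} ≥ 1/2`; in particular for every fixed `δ > 0`
and all sufficiently large `n`, `Pr{γ*_(r) ≥ 2βμt} ≥ 1/2 - δ`. -/
theorem weakest_activated_gain_liminf_half
    (α k ε β μ : ℝ) (hα : 2 ≤ α) (hk0 : 0 ≤ k) (hk1 : k ≤ 1) (hβ : 0 < β)
    (hε0 : 0 < ε) (hε1 : ε < (k + 1) / (α + 1))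
    (hμ : μ = α / (α - 1))
    (Ω : ℕ → Type*) (mΩ : ∀ n, MeasurableSpace (Ω n)) (P : ∀ n, Measure (Ω n))
    (hP : ∀ n, IsProbabilityMeasure (P n))
    (γ : ∀ n : ℕ, Fin n → Ω n → ℝ)
    (hindep : ∀ n, iIndepFun (γ n) (P n))
    (hcdf : ∀ n, ∀ i : Fin n, ∀ x : ℝ,
      P n {ω | γ n i ω ≤ x} =
        ENNReal.ofReal (if x < 1 then 0 else (1 - x ^ (-α)) ^ (cacheSize k n))) :
    (1 : ℝ) / 2 ≤
      atTop.liminf (fun n : ℕ =>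
        (P n {ω | 2 * β * μ * (numActive α k ε n : ℝ) ≤
            orderStat (fun i : Fin n => γ n i ω) (n - numActive α k ε n + 1)}).toReal) ∧
    ∀ δ : ℝ, 0 < δ → ∀ᶠ n : ℕ in atTop,
      (1 : ℝ) / 2 - δ ≤
        (P n {ω | 2 * β * μ * (numActive α k ε n : ℝ) ≤
            orderStat (fun i : Fin n => γ n i ω) (n - numActive α k ε n + 1)}).toReal := by
  have hα0 : (0:ℝ) ≤ α := by linarith
  -- key eventual lower bound
  have key : ∀ δ : ℝ, 0 < δ → ∀ᶠ n : ℕ in atTop,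
      1 - δ ≤ (P n {ω | 2 * β * μ * (numActive α k ε n : ℝ) ≤
          orderStat (fun i : Fin n => γ n i ω) (n - numActive α k ε n + 1)}).toReal := by
    intro δ hδ
    filter_upwards [asym_bound α k ε β μ hα hk0 hk1 hβ hε0 hε1 hμ δ hδ] with n hn
    obtain ⟨ht1, htn, hx1, hbound⟩ := hn
    have := hP n
    have hmain := prob_lower (P n) (m := cacheSize k n) hα0 (γ n) (hindep n)
      (fun i x => hcdf n i x) (2 * β * μ * (numActive α k ε n : ℝ)) hx1 ht1 htn
    have hofreal : ENNReal.ofReal (1 - δ) ≤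
        P n {ω | 2 * β * μ * (numActive α k ε n : ℝ) ≤
          orderStat (fun i : Fin n => γ n i ω) (n - numActive α k ε n + 1)} := by
      calc ENNReal.ofReal (1 - δ) = 1 - ENNReal.ofReal δ := by
            rw [ENNReal.ofReal_sub _ hδ.le, ENNReal.ofReal_one]
        _ ≤ 1 - ENNReal.ofReal ((n.choose (n - numActive α k ε n + 1) : ℝ) *
              ((1 - (2 * β * μ * (numActive α k ε n : ℝ)) ^ (-α)) ^ (cacheSize k n)) ^
                (n - numActive α k ε n + 1)) :=
            tsub_le_tsub_left (ENNReal.ofReal_le_ofReal hbound) _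
        _ ≤ _ := hmain
    exact (ENNReal.ofReal_le_iff_le_toReal (measure_ne_top _ _)).mp hofreal
  constructor
  · apply le_liminf_of_le
    · apply Filter.IsBoundedUnder.isCoboundedUnder_ge
      refine ⟨1, Filter.eventually_map.mpr (Filter.Eventually.of_forall fun n => ?_)⟩
      have h1 : (P n {ω | 2 * β * μ * (numActive α k ε n : ℝ) ≤
          orderStat (fun i : Fin n => γ n i ω) (n - numActive α k ε n + 1)}) ≤ 1 :=
        prob_le_one
      calc (P n _).toReal ≤ (1 : ℝ≥0∞).toReal :=
            ENNReal.toReal_mono ENNReal.one_ne_top h1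
        _ = 1 := by simp
    · filter_upwards [key (1/2) (by norm_num)] with n hn
      linarith
  · intro δ hδ
    filter_upwards [key δ hδ] with n hn
    linarith
end

section
/- Fix α ≥ 2, 0 ≤ k ≤ 1, and 0 < ε < (k+1)/(α+1). For each n let m = n^k, t = n^{(k+1)/(α+1)−ε}, and a_n = (1 − (1 − t/n)^{1/m})^{−1/α}. Then a_n / ( n^{(k+1)/(α+1)} · n^{ε/α} ) → 1 as n → ∞; i.e., a_n ∼ n^{(k+1)/(α+1)} n^{ε/α}. -/
open Filter

/-- With `m = n^k`, `t = n^((k+1)/(α+1)-ε)` and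
`a_n = (1 - (1 - t/n)^(1/m))^(-1/α)`, one has `a_n ∼ n^((k+1)/(α+1)) · n^(ε/α)`. -/
theorem quantile_asymptotics
    (α k ε : ℝ) (hα : 2 ≤ α) (hk0 : 0 ≤ k) (hk1 : k ≤ 1)
    (hε0 : 0 < ε) (hε1 : ε < (k + 1) / (α + 1))
    (m t a : ℕ → ℝ)
    (hm : ∀ n : ℕ, m n = (n : ℝ) ^ k)
    (ht : ∀ n : ℕ, t n = (n : ℝ) ^ ((k + 1) / (α + 1) - ε))
    (ha : ∀ n : ℕ, a n = (1 - (1 - t n / n) ^ (1 / m n)) ^ (-(1 / α))) :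
    Tendsto (fun n : ℕ => a n / ((n : ℝ) ^ ((k + 1) / (α + 1)) * (n : ℝ) ^ (ε / α)))
      atTop (nhds 1) := by
  have hα0 : 0 < α := by linarith
  have hα1 : 0 < α + 1 := by linarith
  set c : ℝ := 1 + ε - (k + 1) / (α + 1) with hc_def
  have hfrac : (k + 1) / (α + 1) ≤ 1 := by
    rw [div_le_one hα1]; linarith
  have hc : 0 < c := by rw [hc_def]; linarith
  set u : ℕ → ℝ := fun n => t n / n with hu_def
  set v : ℕ → ℝ := fun n => Real.log (1 - u n) * (1 / m n) with hv_def
  set A : ℕ → ℝ := fun n => (Real.exp (v n) - 1) / v n with hA_def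
  set B : ℕ → ℝ := fun n => Real.log (1 - u n) / u n with hB_def
  set P : ℕ → ℝ := fun n => (1 - Real.exp (v n)) * m n / u n with hP_def
  -- basic pointwise facts for n ≥ 2
  have basics : ∀ n : ℕ, 2 ≤ n →
      0 < (n : ℝ) ∧ 1 < (n : ℝ) ∧ u n = (n : ℝ) ^ (-c) ∧ 0 < u n ∧ u n < 1 ∧
      1 ≤ m n ∧ Real.log (1 - u n) < 0 ∧ v n < 0 ∧
      (1 - u n) ^ (1 / m n) = Real.exp (v n) ∧ Real.exp (v n) < 1 := by
    intro n hn
    have hN2 : (2 : ℝ) ≤ (n : ℝ) := by exact_mod_cast hn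
    have hN1 : (1 : ℝ) < (n : ℝ) := by linarith
    have hN0 : (0 : ℝ) < (n : ℝ) := by linarith
    have hu_eq : u n = (n : ℝ) ^ (-c) := by
      show t n / (n : ℝ) = _
      rw [ht n]
      rw [show (n : ℝ) ^ ((k + 1) / (α + 1) - ε) / (n : ℝ)
          = (n : ℝ) ^ ((k + 1) / (α + 1) - ε) / (n : ℝ) ^ (1 : ℝ) by rw [Real.rpow_one]]
      rw [← Real.rpow_sub hN0]
      congr 1
      rw [hc_def]; ring
    have hu_pos : 0 < u n := by rw [hu_eq]; exact Real.rpow_pos_of_pos hN0 _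
    have hu_lt1 : u n < 1 := by
      rw [hu_eq]; exact Real.rpow_lt_one_of_one_lt_of_neg hN1 (by linarith)
    have hm1 : 1 ≤ m n := by rw [hm n]; exact Real.one_le_rpow hN1.le hk0
    have hlog_neg : Real.log (1 - u n) < 0 := Real.log_neg (by linarith) (by linarith)
    have hv_neg : v n < 0 := by
      have hminv : 0 < 1 / m n := by positivity
      exact mul_neg_of_neg_of_pos hlog_neg hminv
    have hrpow : (1 - u n) ^ (1 / m n) = Real.exp (v n) := by
      rw [Real.rpow_def_of_pos (by linarith : (0:ℝ) < 1 - u n)]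
    have hexp1 : Real.exp (v n) < 1 := Real.exp_lt_one_iff.mpr hv_neg
    exact ⟨hN0, hN1, hu_eq, hu_pos, hu_lt1, hm1, hlog_neg, hv_neg, hrpow, hexp1⟩
  -- u → 0
  have hu0 : Tendsto u atTop (nhds 0) := by
    have h1 : Tendsto (fun n : ℕ => (n : ℝ) ^ (-c)) atTop (nhds 0) :=
      (tendsto_rpow_neg_atTop hc).comp tendsto_natCast_atTop_atTop
    refine h1.congr' ?_
    filter_upwards [eventually_ge_atTop 2] with n hn
    exact ((basics n hn).2.2.1).symm
  -- log (1 - u) → 0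
  have hlogu0 : Tendsto (fun n => Real.log (1 - u n)) atTop (nhds 0) := by
    have h1 : Tendsto (fun n => 1 - u n) atTop (nhds 1) := by
      simpa using tendsto_const_nhds.sub hu0
    have h2 := ((Real.continuousAt_log one_ne_zero).tendsto).comp h1
    simpa [Real.log_one, Function.comp_def] using h2
  -- v → 0
  have hv0 : Tendsto v atTop (nhds 0) := by
    apply squeeze_zero_norm' (a := fun n => |Real.log (1 - u n)|)
    · filter_upwards [eventually_ge_atTop 2] with n hn
      obtain ⟨_, _, _, _, _, hm1, _, _, _, _⟩ := basics n hn
      have h1 : |(1 : ℝ) / m n| ≤ 1 := by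
        rw [abs_of_pos (by positivity)]
        rw [div_le_one (by linarith)]; linarith
      calc ‖v n‖ = |Real.log (1 - u n)| * |1 / m n| := abs_mul _ _
        _ ≤ |Real.log (1 - u n)| * 1 := by
            exact mul_le_mul_of_nonneg_left h1 (abs_nonneg _)
        _ = |Real.log (1 - u n)| := mul_one _
    · simpa using hlogu0.abs
  -- punctured versions
  have hu0' : Tendsto u atTop (nhdsWithin 0 {x : ℝ | x ≠ 0}) := by
    rw [tendsto_nhdsWithin_iff]
    refine ⟨hu0, ?_⟩
    filter_upwards [eventually_ge_atTop 2] with n hn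
    exact ((basics n hn).2.2.2.1).ne'
  have hv0' : Tendsto v atTop (nhdsWithin 0 {x : ℝ | x ≠ 0}) := by
    rw [tendsto_nhdsWithin_iff]
    refine ⟨hv0, ?_⟩
    filter_upwards [eventually_ge_atTop 2] with n hn
    exact ((basics n hn).2.2.2.2.2.2.2.1).ne
  -- slope limits
  have hexp_slope : Tendsto (fun x : ℝ => (Real.exp x - 1) / x)
      (nhdsWithin 0 {x : ℝ | x ≠ 0}) (nhds 1) := by
    have h := Real.hasDerivAt_exp 0
    rw [hasDerivAt_iff_tendsto_slope] at h
    rw [Real.exp_zero] at h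
    refine h.congr fun x => ?_
    simp [slope_def_field, Real.exp_zero]
  have hlog_slope : Tendsto (fun x : ℝ => Real.log (1 - x) / x)
      (nhdsWithin 0 {x : ℝ | x ≠ 0}) (nhds (-1)) := by
    have h1 : HasDerivAt (fun x : ℝ => 1 - x) (-1) 0 := by
      simpa using (hasDerivAt_id (0:ℝ)).const_sub (1:ℝ)
    have h2 := (Real.hasDerivAt_log (by norm_num : (1:ℝ) - 0 ≠ 0)).comp 0 h1
    have h3 : HasDerivAt (fun x : ℝ => Real.log (1 - x)) (-1) 0 := by
      simpa [Function.comp_def] using h2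
    rw [hasDerivAt_iff_tendsto_slope] at h3
    refine h3.congr fun x => ?_
    simp [slope_def_field, Real.log_one]
  have hA : Tendsto A atTop (nhds 1) := hexp_slope.comp hv0'
  have hB : Tendsto B atTop (nhds (-1)) := hlog_slope.comp hu0'
  -- P → 1
  have hP : Tendsto P atTop (nhds 1) := by
    have h := (hA.mul hB).neg
    rw [show -(1 * (-1 : ℝ)) = 1 by norm_num] at h
    refine h.congr' ?_
    filter_upwards [eventually_ge_atTop 2] with n hn
    obtain ⟨hN0, hN1, hu_eq, hu_pos, hu_lt1, hm1, hlog_neg, hv_neg, hrpow, hexp1⟩ :=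
      basics n hn
    have hm0 : m n ≠ 0 := by positivity
    have hune : u n ≠ 0 := hu_pos.ne'
    have hlne : Real.log (1 - u n) ≠ 0 := hlog_neg.ne
    show -(A n * B n) = P n
    rw [hA_def, hB_def, hP_def, hv_def]
    simp only
    field_simp
    ring
  have hmain : Tendsto (fun n => P n ^ (-(1 / α))) atTop (nhds 1) := by
    have h := hP.rpow_const (p := -(1 / α)) (Or.inl one_ne_zero)
    simpa using h
  refine hmain.congr' ?_
  filter_upwards [eventually_ge_atTop 2] with n hn
  obtain ⟨hN0, hN1, hu_eq, hu_pos, hu_lt1, hm1, hlog_neg, hv_neg, hrpow, hexp1⟩ :=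
    basics n hn
  have hNpow : (n : ℝ) ^ ((k + 1) / (α + 1)) * (n : ℝ) ^ (ε / α)
      = (n : ℝ) ^ ((k + c) / α) := by
    rw [← Real.rpow_add hN0]
    congr 1
    rw [hc_def]
    field_simp
    ring
  have hmu : m n / u n = (n : ℝ) ^ (k + c) := by
    rw [hm n, hu_eq, ← Real.rpow_sub hN0]
    congr 1; ring
  have hPn : P n = (1 - Real.exp (v n)) * (n : ℝ) ^ (k + c) := by
    rw [hP_def]; simp only; rw [mul_div_assoc, hmu]
  have h2 : ((n : ℝ) ^ (k + c)) ^ (-(1 / α)) = ((n : ℝ) ^ ((k + c) / α))⁻¹ := by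
    rw [← Real.rpow_mul hN0.le,
      show (k + c) * (-(1 / α)) = -((k + c) / α) by ring,
      Real.rpow_neg hN0.le]
  have ha' : a n = (1 - Real.exp (v n)) ^ (-(1 / α)) := by
    have : (1 - t n / (n : ℝ)) ^ (1 / m n) = Real.exp (v n) := hrpow
    rw [ha n, this]
  have hfnn : (0 : ℝ) ≤ 1 - Real.exp (v n) := by linarith
  calc P n ^ (-(1 / α))
      = (1 - Real.exp (v n)) ^ (-(1 / α)) * ((n : ℝ) ^ (k + c)) ^ (-(1 / α)) := by
        rw [hPn, Real.mul_rpow hfnn (Real.rpow_nonneg hN0.le _)]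
    _ = a n / ((n : ℝ) ^ ((k + 1) / (α + 1)) * (n : ℝ) ^ (ε / α)) := by
        rw [h2, hNpow, ha']
        exact (div_eq_mul_inv _ _).symm
end
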